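/- Let μ*, μ̂ ∈ [0,1], n ≥ 1 a positive integer, and C > 0. If |(1 − μ̂) − (1 − μ*)| ≤ √(3(1 − μ*)C/n) + 3C/n, then |μ̂ − μ*| ≤ √(12(1 − μ̂)C/n) + 12C/n. -/

import Mathlib

theorem stmt_5 (μs μh : ℝ) (hμs : μs ∈ Set.Icc (0:ℝ) 1) (hμh : μh ∈ Set.Icc (0:ℝ) 1)
    (n : ℕ) (hn : 1 ≤ n) (C : ℝ) (hC : 0 < C)
    (h : |(1 - μh) - (1 - μs)| ≤ Real.sqrt (3 * (1 - μs) * C / n) + 3 * C / n) :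
    |μh - μs| ≤ Real.sqrt (12 * (1 - μh) * C / n) + 12 * C / n := by
  obtain ⟨hs0, hs1⟩ := hμs
  obtain ⟨hh0, hh1⟩ := hμh
  have hn' : (0:ℝ) < n := by exact_mod_cast Nat.pos_of_ne_zero (by omega)
  have ht : 0 < C / n := by positivity
  set t := C / n with htdef
  have ha : 0 ≤ 1 - μs := by linarith
  have hb : 0 ≤ 1 - μh := by linarith
  set s := Real.sqrt (3 * (1 - μs) * C / n) with hsdef
  set u := Real.sqrt (12 * (1 - μh) * C / n) with hudef
  have hs2 : s ^ 2 = 3 * (1 - μs) * t := by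
    rw [hsdef]
    rw [Real.sq_sqrt (by positivity)]
    field_simp [htdef]
    rw [htdef]; field_simp <;> ring
  have hu2 : u ^ 2 = 12 * (1 - μh) * t := by
    rw [hudef]
    rw [Real.sq_sqrt (by positivity)]
    field_simp [htdef]
    rw [htdef]; field_simp <;> ring
  have hsnn : 0 ≤ s := Real.sqrt_nonneg _
  have hunn : 0 ≤ u := Real.sqrt_nonneg _
  have h' : |μh - μs| ≤ s + 3 * t := by
    have : |(1 - μh) - (1 - μs)| = |μh - μs| := by
      rw [show (1 - μh) - (1 - μs) = -(μh - μs) by ring, abs_neg]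
    rw [this] at h
    have : 3 * C / ↑n = 3 * t := by rw [htdef]; ring
    linarith [h, this.le]
  rw [abs_le] at h' ⊢
  obtain ⟨h1, h2⟩ := h'
  -- key: s ≤ u/2 + 11t/2
  have key : s ≤ u / 2 + 11 * t / 2 := by
    nlinarith [sq_nonneg (s - 3 * t / 2 - u / 2), sq_nonneg (u + t), sq_nonneg s, sq_nonneg u,
      mul_pos ht ht, mul_nonneg hunn ht.le, mul_nonneg hsnn ht.le]
  have h3t : 3 * C / ↑n = 3 * t := by rw [htdef]; ring
  have h12t : 12 * C / ↑n = 12 * t := by rw [htdef]; ring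
  constructor <;> rw [h12t] <;> nlinarith
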